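/- For any n ≥ 3, there exists an arrangement of n lines in the plane in which the number of triangles of minimum (equivalently, after scaling, unit) area is at least ⌊(n² - n)/6⌋; in particular the maximum number of unit-area triangles determined by n lines is Ω(n²). -/

import Mathlib

open scoped Classical

/-- A line in the plane given by the equation `a·x + b·y = c` with `(a,b) ≠ (0,0)`. -/
structure Line where
  a : ℝ
  b : ℝ
  c : ℝ
  hab : (a, b) ≠ (0, 0)

namespace Line

/-- The set of points of a line. -/
def pts (L : Line) : Set (ℝ × ℝ) := {p | L.a * p.1 + L.b * p.2 = L.c}

/-- The determinant of the directions of two lines. -/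
def lineDet (L M : Line) : ℝ := L.a * M.b - L.b * M.a

/-- Two lines are parallel (possibly equal) when their directions are proportional. -/
def Parallel (L M : Line) : Prop := lineDet L M = 0

/-- The intersection point of two non-parallel lines. -/
noncomputable def inter (L M : Line) : ℝ × ℝ :=
  ((L.c * M.b - M.c * L.b) / lineDet L M, (L.a * M.c - M.a * L.c) / lineDet L M)

end Line

/-- Standard Euclidean area of the triangle with vertices `p`, `q`, `r`. -/
noncomputable def triangleArea (p q r : ℝ × ℝ) : ℝ :=
  |(q.1 - p.1) * (r.2 - p.2) - (r.1 - p.1) * (q.2 - p.2)| / 2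

/-- The area of the triangle determined by three (pairwise non-parallel) lines. -/
noncomputable def triArea (L M N : Line) : ℝ :=
  triangleArea (Line.inter L M) (Line.inter L N) (Line.inter M N)

/-- Three lines form a (non-degenerate) triangle when they are pairwise
non-parallel and not concurrent. -/
def FormsTriangle (L M N : Line) : Prop :=
  ¬ Line.Parallel L M ∧ ¬ Line.Parallel L N ∧ ¬ Line.Parallel M N ∧
    Line.inter L M ∉ N.pts

/-- The open region bounded by the triangle formed by three lines: the interior
of the convex hull of the three pairwise intersection points. -/
noncomputable def openTriangle (L M N : Line) : Set (ℝ × ℝ) :=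
  interior (convexHull ℝ {Line.inter L M, Line.inter L N, Line.inter M N})

-- ### helper geometry

noncomputable def vln (t : ℝ) : Line := ⟨1, 0, t, by norm_num [Prod.ext_iff]⟩
noncomputable def hln (t : ℝ) : Line := ⟨0, 1, t, by norm_num [Prod.ext_iff]⟩
noncomputable def dln (t : ℝ) : Line := ⟨1, 1, t, by norm_num [Prod.ext_iff]⟩

lemma triangleArea_sw12 (p q r : ℝ × ℝ) : triangleArea p q r = triangleArea q p r := by
  unfold triangleArea
  rw [show (p.1 - q.1) * (r.2 - q.2) - (r.1 - q.1) * (p.2 - q.2)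
      = -((q.1 - p.1) * (r.2 - p.2) - (r.1 - p.1) * (q.2 - p.2)) by ring, abs_neg]

lemma triangleArea_sw23 (p q r : ℝ × ℝ) : triangleArea p q r = triangleArea p r q := by
  unfold triangleArea
  rw [show (r.1 - p.1) * (q.2 - p.2) - (q.1 - p.1) * (r.2 - p.2)
      = -((q.1 - p.1) * (r.2 - p.2) - (r.1 - p.1) * (q.2 - p.2)) by ring, abs_neg]

lemma inter_comm' (L M : Line) : Line.inter L M = Line.inter M L := by
  unfold Line.inter Line.lineDet
  simp only [Prod.mk.injEq]
  constructor
  · rw [show M.c * L.b - L.c * M.b = -(L.c * M.b - M.c * L.b) by ring,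
        show M.a * L.b - M.b * L.a = -(L.a * M.b - L.b * M.a) by ring, neg_div_neg_eq]
  · rw [show M.a * L.c - L.a * M.c = -(L.a * M.c - M.a * L.c) by ring,
        show M.a * L.b - M.b * L.a = -(L.a * M.b - L.b * M.a) by ring, neg_div_neg_eq]

lemma triArea_sw12 (L M N : Line) : triArea L M N = triArea M L N := by
  unfold triArea
  rw [inter_comm' M L, triangleArea_sw23]

lemma triArea_sw23 (L M N : Line) : triArea L M N = triArea L N M := by
  unfold triArea
  rw [inter_comm' N M, triangleArea_sw12]

lemma area_vhd (s t u : ℝ) : triArea (vln s) (hln t) (dln u) = (u - s - t)^2 / 2 := by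
  simp only [triArea, triangleArea, Line.inter, Line.lineDet, vln, hln, dln]
  norm_num
  rw [← abs_mul, show ((t - u) / -1 - s) * (u - s - t) = (u - s - t)^2 by ring,
    abs_of_nonneg (by positivity)]

lemma area_vdh (s t u : ℝ) : triArea (vln s) (dln u) (hln t) = (u - s - t)^2 / 2 := by
  rw [triArea_sw23, area_vhd]
lemma area_hvd (s t u : ℝ) : triArea (hln t) (vln s) (dln u) = (u - s - t)^2 / 2 := by
  rw [triArea_sw12, area_vhd]
lemma area_hdv (s t u : ℝ) : triArea (hln t) (dln u) (vln s) = (u - s - t)^2 / 2 := by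
  rw [triArea_sw23, area_hvd]
lemma area_dvh (s t u : ℝ) : triArea (dln u) (vln s) (hln t) = (u - s - t)^2 / 2 := by
  rw [triArea_sw12, area_vdh]
lemma area_dhv (s t u : ℝ) : triArea (dln u) (hln t) (vln s) = (u - s - t)^2 / 2 := by
  rw [triArea_sw12, area_hdv]

lemma par_vv (s t : ℝ) : Line.Parallel (vln s) (vln t) := by
  simp [Line.Parallel, Line.lineDet, vln]
lemma par_hh (s t : ℝ) : Line.Parallel (hln s) (hln t) := by
  simp [Line.Parallel, Line.lineDet, hln]
lemma par_dd (s t : ℝ) : Line.Parallel (dln s) (dln t) := by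
  simp [Line.Parallel, Line.lineDet, dln]

lemma key_bound (m s t : ℕ) : (1:ℝ)/8 ≤ ((m:ℝ) - 1/2 - s - t)^2 / 2 := by
  have h : (m:ℝ) - 1/2 - s - t = ((2*(m:ℤ) - 2*s - 2*t - 1 : ℤ) : ℝ)/2 := by
    push_cast; ring
  set d : ℤ := 2*(m:ℤ) - 2*s - 2*t - 1 with hd
  have h1 : (1:ℤ) ≤ d^2 := by
    have : d ≤ -1 ∨ 1 ≤ d := by omega
    rcases this with h' | h' <;> nlinarith
  have h1' : (1:ℝ) ≤ (d:ℝ)^2 := by exact_mod_cast h1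
  rw [h]
  nlinarith

lemma forms_vhd (s t u : ℝ) (h : s + t ≠ u) : FormsTriangle (vln s) (hln t) (dln u) := by
  refine ⟨?_, ?_, ?_, ?_⟩ <;>
    simp [Line.Parallel, Line.lineDet, vln, hln, dln, Line.inter, Line.pts]
  exact h

def Tt (x : ℕ) : ℕ := x * (x+1) / 2

lemma two_T (x : ℕ) : 2 * Tt x = x * (x + 1) :=
  Nat.mul_div_cancel' ((Nat.even_mul_succ_self x).two_dvd) 

lemma T_succ (m : ℕ) : Tt (m+1) = Tt m + (m+1) := by
  have h1 := two_T m; have h2 := two_T (m+1)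
  have : (m+1)*(m+1+1) = m*(m+1) + 2*(m+1) := by ring
  omega

lemma sum_aux (q e : ℕ) : ∑ x ∈ Finset.range q, (x + 1 - e) = Tt (q - e) := by
  induction q with
  | zero => simp [Tt]
  | succ q ih =>
    rw [Finset.sum_range_succ, ih]
    rcases le_or_gt e q with h | h
    · rw [show q + 1 - e = (q - e) + 1 by omega, T_succ]
    · rw [show q + 1 - e = 0 by omega, show q - e = 0 by omega]
      simp [Tt]

lemma cnt1 (q e : ℕ) :
    ((Finset.range q ×ˢ Finset.range q).filter fun p => p.2 + e ≤ p.1).card = Tt (q - e) := by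
  classical
  rw [Finset.card_filter, Finset.sum_product]
  rw [Finset.sum_congr rfl (fun x hx => ?_), sum_aux]
  have hx' : x < q := Finset.mem_range.mp hx
  rw [Finset.sum_boole]
  have : (Finset.range q).filter (fun y => y + e ≤ x) = Finset.range (x + 1 - e) := by
    ext y; simp only [Finset.mem_filter, Finset.mem_range]; omega
  rw [this, Finset.card_range, Nat.cast_id]

lemma cnt2 (q e : ℕ) :
    ((Finset.range q ×ˢ Finset.range q).filter fun p => p.1 + e ≤ p.2).card = Tt (q - e) := by
  classical
  rw [Finset.card_filter, Finset.sum_product]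
  have h1 : ∀ x ∈ Finset.range q, (∑ y ∈ Finset.range q, if x + e ≤ y then 1 else 0)
      = q - (x + e) := by
    intro x hx
    rw [Finset.sum_boole]
    have : (Finset.range q).filter (fun y => x + e ≤ y) = Finset.Ico (x+e) q := by
      ext y; simp only [Finset.mem_filter, Finset.mem_range, Finset.mem_Ico]; omega
    rw [this]; simp [Nat.card_Ico]
  rw [Finset.sum_congr rfl h1]
  have hrefl := Finset.sum_range_reflect (fun x => x + 1 - e) q
  rw [← sum_aux q e, ← hrefl]
  apply Finset.sum_congr rfl
  intro x hx
  have hx' : x < q := Finset.mem_range.mp hx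
  omega

lemma card_band (q w d : ℕ) :
    ((Finset.range q ×ˢ Finset.range q).filter
      fun p => ¬(p.2 + (w+1) ≤ p.1) ∧ ¬(p.1 + d ≤ p.2)).card
      = q*q - Tt (q - (w+1)) - Tt (q - d) := by
  classical
  set S := Finset.range q ×ˢ Finset.range q with hS
  have hScard : S.card = q*q := by simp [hS]
  have h1 := Finset.card_filter_add_card_filter_not
    (s := S) (p := fun p => p.2 + (w+1) ≤ p.1)
  have h2 := Finset.card_filter_add_card_filter_not
    (s := S.filter (fun p => ¬(p.2 + (w+1) ≤ p.1))) (p := fun p => p.1 + d ≤ p.2)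
  rw [Finset.filter_filter, Finset.filter_filter] at h2
  have h3 : S.filter (fun p => ¬(p.2+(w+1) ≤ p.1) ∧ p.1 + d ≤ p.2)
      = S.filter (fun p => p.1 + d ≤ p.2) := by
    apply Finset.filter_congr; intro p hp
    constructor
    · exact fun h => h.2
    · intro h; exact ⟨by omega, h⟩
  rw [h3] at h2
  have c1 := cnt1 q (w+1)
  have c2 := cnt2 q d
  rw [← hS] at c1 c2
  omega

lemma card_Q (q av w : ℕ) (hav : 1 ≤ av) (hw : w ≤ av) :
    ((Finset.range av ×ˢ Finset.range q ×ˢ Finset.range q).filter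
       fun t => t.1 + t.2.1 = t.2.2 + w).card
    = q*q - Tt (q - (w+1)) - Tt (q - (av - w)) := by
  classical
  rw [← card_band q w (av - w)]
  apply Finset.card_bij (fun t _ => (t.2.1, t.2.2))
  · rintro ⟨i, j, k⟩ ht
    simp only [Finset.mem_filter, Finset.mem_product, Finset.mem_range] at ht ⊢
    omega
  · rintro ⟨i, j, k⟩ ht ⟨i', j', k'⟩ ht' h
    simp only [Finset.mem_filter, Finset.mem_product, Finset.mem_range] at ht ht'
    simp only [Prod.mk.injEq] at h ⊢
    omega
  · intro p hp
    simp only [Finset.mem_filter, Finset.mem_product, Finset.mem_range] at hp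
    exact ⟨(p.2 + w - p.1, p.1, p.2), by
      simp only [Finset.mem_filter, Finset.mem_product, Finset.mem_range]; omega, rfl⟩

/-- For every `n ≥ 3` there is an arrangement of `n` distinct lines in the plane
and a (positive) value `a` which is the minimum area among all triangles of the
arrangement, such that at least `⌊(n² - n)/6⌋` triples of the lines form a
triangle of area exactly `a`.  In particular (rescaling so that `a = 1`) the
maximum number of unit-area triangles determined by `n` lines is `Ω(n²)`. -/
theorem stmt3 (n : ℕ) (hn : 3 ≤ n) :
    ∃ L : Fin n → Line, Function.Injective L ∧
      ∃ a : ℝ, 0 < a ∧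
        (∀ i j k : Fin n, FormsTriangle (L i) (L j) (L k) →
          a ≤ triArea (L i) (L j) (L k)) ∧
        (n ^ 2 - n) / 6 ≤
          (Finset.univ.filter (fun t : Fin n × Fin n × Fin n =>
            t.1 < t.2.1 ∧ t.2.1 < t.2.2 ∧
            FormsTriangle (L t.1) (L t.2.1) (L t.2.2) ∧
            triArea (L t.1) (L t.2.1) (L t.2.2) = a)).card := by
  classical
  set q : ℕ := (n+1)/3 with hqdef
  set av : ℕ := n - 2*q with havdef
  set z : ℕ := (if n % 6 = 0 ∨ n % 6 = 2 then n/6 else n/6 + 1) with hzdef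
  have hsum : av + q + q = n := by omega
  have hq1 : 1 ≤ q := by omega
  have hav1 : 1 ≤ av := by omega
  have hzb : 1 ≤ z ∧ z ≤ av := by
    rw [hzdef]; split_ifs with h
    · rcases h with h | h <;> omega
    · omega
  set L : Fin n → Line := fun i =>
    if (i:ℕ) < av then vln ((i:ℕ) : ℝ)
    else if (i:ℕ) < av + q then hln (((i:ℕ) - av : ℕ) : ℝ)
    else dln ((((i:ℕ) - av - q + z : ℕ) : ℝ) - 1/2) with hLdef
  refine ⟨L, ?_, 1/8, by norm_num, ?_, ?_⟩
  · -- injectivity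
    intro i j hij
    rw [hLdef] at hij
    simp only [] at hij
    split_ifs at hij <;>
      simp only [vln, hln, dln, Line.mk.injEq, Nat.cast_inj, sub_left_inj,
        one_ne_zero, zero_ne_one, and_true, and_false, false_and, true_and] at hij <;>
      exact Fin.ext (by omega)
  · -- minimum area
    intro i j k hF
    have kind : ∀ i : Fin n, (∃ m : ℕ, L i = vln m) ∨ (∃ m : ℕ, L i = hln m) ∨
        ∃ m : ℕ, L i = dln ((m:ℝ) - 1/2) := by
      intro i; rw [hLdef]; dsimp only; split_ifs with h1 h2
      · exact Or.inl ⟨_, rfl⟩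
      · exact Or.inr (Or.inl ⟨_, rfl⟩)
      · exact Or.inr (Or.inr ⟨_, rfl⟩)
    rcases kind i with ⟨s,hs⟩|⟨s,hs⟩|⟨s,hs⟩ <;> rcases kind j with ⟨t,ht⟩|⟨t,ht⟩|⟨t,ht⟩ <;>
      rcases kind k with ⟨u,hu⟩|⟨u,hu⟩|⟨u,hu⟩ <;> rw [hs, ht, hu] at hF ⊢ <;>
      first
      | exact absurd (par_vv _ _) hF.1
      | exact absurd (par_hh _ _) hF.1
      | exact absurd (par_dd _ _) hF.1
      | exact absurd (par_vv _ _) hF.2.1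
      | exact absurd (par_hh _ _) hF.2.1
      | exact absurd (par_dd _ _) hF.2.1
      | exact absurd (par_vv _ _) hF.2.2.1
      | exact absurd (par_hh _ _) hF.2.2.1
      | exact absurd (par_dd _ _) hF.2.2.1
      | (rw [area_vhd]; exact key_bound _ _ _)
      | (rw [area_vdh]; exact key_bound _ _ _)
      | (rw [area_hvd]; exact key_bound _ _ _)
      | (rw [area_hdv]; exact key_bound _ _ _)
      | (rw [area_dvh]; exact key_bound _ _ _)
      | (rw [area_dhv]; exact key_bound _ _ _)
  · -- the count
    set Qset : Finset (ℕ × ℕ × ℕ) :=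
      ((Finset.range av ×ˢ Finset.range q ×ˢ Finset.range q).filter
        fun t => t.1 + t.2.1 = t.2.2 + (z-1) ∨ t.1 + t.2.1 = t.2.2 + z) with hQdef
    have hL1 : ∀ (m : ℕ) (h : m < n), m < av → L ⟨m, h⟩ = vln m := by
      intro m h hm
      rw [hLdef]; dsimp only; rw [if_pos hm]
    have hL2 : ∀ (m : ℕ) (h : av + m < n), m < q → L ⟨av + m, h⟩ = hln m := by
      intro m h hm
      rw [hLdef]; dsimp only
      rw [if_neg (by omega), if_pos (by omega)]
      congr 1
      congr 1
      omega
    have hL3 : ∀ (m : ℕ) (h : av + q + m < n), m < q →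
        L ⟨av + q + m, h⟩ = dln (((m + z : ℕ) : ℝ) - 1/2) := by
      intro m h hm
      rw [hLdef]; dsimp only
      rw [if_neg (by omega), if_neg (by omega)]
      congr 2
      congr 1
      omega
    -- the injection
    have hQF : Qset.card ≤ (Finset.univ.filter (fun t : Fin n × Fin n × Fin n =>
            t.1 < t.2.1 ∧ t.2.1 < t.2.2 ∧
            FormsTriangle (L t.1) (L t.2.1) (L t.2.2) ∧
            triArea (L t.1) (L t.2.1) (L t.2.2) = 1/8)).card := by
      apply Finset.card_le_card_of_injOn (fun t =>
        (⟨t.1 % n, Nat.mod_lt _ (by omega)⟩, ⟨(av + t.2.1) % n, Nat.mod_lt _ (by omega)⟩,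
         ⟨(av + q + t.2.2) % n, Nat.mod_lt _ (by omega)⟩))
      · rintro ⟨i, j, k⟩ ht
        rw [hQdef] at ht
        simp only [Finset.mem_coe, Finset.mem_filter, Finset.mem_product, Finset.mem_range] at ht
        obtain ⟨⟨hiav, hjq, hkq⟩, hcond⟩ := ht
        have h1 : i % n = i := Nat.mod_eq_of_lt (by omega)
        have h2 : (av + j) % n = av + j := Nat.mod_eq_of_lt (by omega)
        have h3 : (av + q + k) % n = av + q + k := Nat.mod_eq_of_lt (by omega)
        have e1 : L ⟨i % n, Nat.mod_lt _ (by omega)⟩ = vln i := by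
          convert hL1 i (by omega) hiav using 2
          simp only [Fin.mk.injEq]; omega
        have e2 : L ⟨(av + j) % n, Nat.mod_lt _ (by omega)⟩ = hln j := by
          convert hL2 j (by omega) hjq using 2
          simp only [Fin.mk.injEq]; omega
        have e3 : L ⟨(av + q + k) % n, Nat.mod_lt _ (by omega)⟩
            = dln (((k + z : ℕ) : ℝ) - 1/2) := by
          convert hL3 k (by omega) hkq using 2
          simp only [Fin.mk.injEq]; omega
        simp only [Finset.mem_coe, Finset.mem_filter, Finset.mem_univ, true_and]
        refine ⟨?_, ?_, ?_, ?_⟩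
        · exact Fin.mk_lt_mk.2 (by omega)
        · exact Fin.mk_lt_mk.2 (by omega)
        · rw [e1, e2, e3]
          apply forms_vhd
          intro heq
          push_cast at heq
          have hcast : ((2*(i+j)+1 : ℕ) : ℝ) = ((2*(k+z) : ℕ) : ℝ) := by push_cast; linarith
          have := Nat.cast_injective hcast
          omega
        · rw [e1, e2, e3, area_vhd]
          rcases hcond with hc | hc
          · rw [show ((k + z : ℕ) : ℝ) - 1/2 - i - j = 1/2 by
              rw [show k + z = i + j + 1 by omega]; push_cast; ring]
            norm_num
          · rw [show ((k + z : ℕ) : ℝ) - 1/2 - i - j = -(1/2) by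
              rw [show k + z = i + j by omega]; push_cast; ring]
            norm_num
      · rintro ⟨i, j, k⟩ ht ⟨i', j', k'⟩ ht' heq
        rw [hQdef] at ht ht'
        simp only [Finset.coe_filter, Set.mem_setOf_eq, Finset.mem_coe, Finset.mem_filter,
          Finset.mem_product, Finset.mem_range] at ht ht'
        simp only [Prod.mk.injEq, Fin.mk.injEq] at heq ⊢
        obtain ⟨ha, hb, hc⟩ := heq
        have h1 : i % n = i := Nat.mod_eq_of_lt (by omega)
        have h1' : i' % n = i' := Nat.mod_eq_of_lt (by omega)
        have h2 : (av + j) % n = av + j := Nat.mod_eq_of_lt (by omega)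
        have h2' : (av + j') % n = av + j' := Nat.mod_eq_of_lt (by omega)
        have h3 : (av + q + k) % n = av + q + k := Nat.mod_eq_of_lt (by omega)
        have h3' : (av + q + k') % n = av + q + k' := Nat.mod_eq_of_lt (by omega)
        omega
    refine le_trans ?_ hQF
    -- arithmetic lower bound on Qset.card
    have hz1 : 1 ≤ z := hzb.1
    have hzav : z ≤ av := hzb.2
    have hcard : Qset.card = (q*q - Tt (q - ((z-1)+1)) - Tt (q - (av - (z-1))))
        + (q*q - Tt (q - (z+1)) - Tt (q - (av - z))) := by
      rw [hQdef, Finset.filter_or, Finset.card_union_of_disjoint, card_Q q av (z-1) hav1 (by omega),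
        card_Q q av z hav1 hzav]
      rw [Finset.disjoint_left]
      rintro ⟨i, j, k⟩ h h'
      simp only [Finset.mem_filter, Finset.mem_product, Finset.mem_range] at h h'
      omega
    rw [hcard]
    have hsP : ∀ x : ℕ, x ≤ x * x := by
      intro x; cases x with
      | zero => simp
      | succ t => exact Nat.le_mul_of_pos_left _ (Nat.succ_pos t)
    have hr6 : n % 6 = 0 ∨ n % 6 = 1 ∨ n % 6 = 2 ∨ n % 6 = 3 ∨ n % 6 = 4 ∨ n % 6 = 5 := by
      omega
    rcases hr6 with h | h | h | h | h | h
    · -- n = 6s, s ≥ 1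
      obtain ⟨s, hs⟩ : ∃ s, n = 6*s := ⟨n/6, by omega⟩
      have hz' : z = s := by rw [hzdef, if_pos (Or.inl h)]; omega
      have hq' : q = 2*s := by omega
      have hav' : av = 2*s := by omega
      have hs1 : 1 ≤ s := by omega
      rw [show q - ((z-1)+1) = s by omega, show q - (av - (z-1)) = s - 1 by omega,
        show q - (z+1) = s - 1 by omega, show q - (av - z) = s by omega]
      have hTs := two_T s
      have hTs1 := two_T (s-1)
      rw [show s - 1 + 1 = s by omega] at hTs1
      rw [Nat.sub_mul, one_mul] at hTs1
      have hP := hsP s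
      have hq2 : q * q = 4 * (s*s) := by rw [hq']; ring
      have hn2 : n ^ 2 = 36 * (s*s) := by rw [hs]; ring
      rw [hn2, hq2]
      have hl1 : s * (s+1) = s*s + s := by ring
      omega
    · -- n = 6s+1, s ≥ 1
      obtain ⟨s, hs⟩ : ∃ s, n = 6*s+1 := ⟨n/6, by omega⟩
      have hz' : z = s + 1 := by rw [hzdef, if_neg (by omega)]; omega
      have hq' : q = 2*s := by omega
      have hav' : av = 2*s+1 := by omega
      have hs1 : 1 ≤ s := by omega
      rw [show q - ((z-1)+1) = s - 1 by omega, show q - (av - (z-1)) = s - 1 by omega,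
        show q - (z+1) = s - 2 by omega, show q - (av - z) = s by omega]
      have hTs := two_T s
      have hTs1 := two_T (s-1)
      rw [show s - 1 + 1 = s by omega] at hTs1
      rw [Nat.sub_mul, one_mul] at hTs1
      have hTs2 := two_T (s-2)
      have hkey : (s-2) * ((s-2)+1) + 3*s = s*s + 2 := by
        rcases Nat.lt_or_ge s 2 with h2 | h2
        · have hs1' : s = 1 := by omega
          subst hs1'; rfl
        · obtain ⟨u, rfl⟩ : ∃ u, s = u + 2 := ⟨s-2, by omega⟩
          rw [show u + 2 - 2 = u by omega]
          ring
      have hP := hsP s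
      have hq2 : q * q = 4 * (s*s) := by rw [hq']; ring
      have hn2 : n ^ 2 = 36 * (s*s) + 12*s + 1 := by rw [hs]; ring
      rw [hn2, hq2]
      have hl1 : s * (s+1) = s*s + s := by ring
      omega
    · -- n = 6s+2, s ≥ 1
      obtain ⟨s, hs⟩ : ∃ s, n = 6*s+2 := ⟨n/6, by omega⟩
      have hz' : z = s := by rw [hzdef, if_pos (Or.inr h)]; omega
      have hq' : q = 2*s+1 := by omega
      have hav' : av = 2*s := by omega
      have hs1 : 1 ≤ s := by omega
      rw [show q - ((z-1)+1) = s + 1 by omega, show q - (av - (z-1)) = s by omega,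
        show q - (z+1) = s by omega, show q - (av - z) = s + 1 by omega]
      have hTs := two_T s
      have hTs1 := two_T (s+1)
      have hP := hsP s
      have hq2 : q * q = 4 * (s*s) + 4*s + 1 := by rw [hq']; ring
      have hn2 : n ^ 2 = 36 * (s*s) + 24*s + 4 := by rw [hs]; ring
      rw [hn2, hq2]
      have hl1 : s * (s+1) = s*s + s := by ring
      have hl2 : (s+1) * (s+1+1) = s*s + 3*s + 2 := by ring
      omega
    · -- n = 6s+3, s ≥ 0
      obtain ⟨s, hs⟩ : ∃ s, n = 6*s+3 := ⟨n/6, by omega⟩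
      have hz' : z = s + 1 := by rw [hzdef, if_neg (by omega)]; omega
      have hq' : q = 2*s+1 := by omega
      have hav' : av = 2*s+1 := by omega
      rw [show q - ((z-1)+1) = s by omega, show q - (av - (z-1)) = s by omega,
        show q - (z+1) = s - 1 by omega, show q - (av - z) = s + 1 by omega]
      have hTs := two_T s
      have hTs1 := two_T (s-1)
      have hl3 : (s-1) * ((s-1)+1) = s*s - s := by
        rcases Nat.eq_zero_or_pos s with h0 | h0
        · subst h0; rfl
        · rw [show s - 1 + 1 = s by omega, Nat.sub_mul, one_mul]
      have hTs2 := two_T (s+1)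
      have hP := hsP s
      have hq2 : q * q = 4 * (s*s) + 4*s + 1 := by rw [hq']; ring
      have hn2 : n ^ 2 = 36 * (s*s) + 36*s + 9 := by rw [hs]; ring
      rw [hn2, hq2]
      have hl1 : s * (s+1) = s*s + s := by ring
      have hl2 : (s+1) * (s+1+1) = s*s + 3*s + 2 := by ring
      omega
    · -- n = 6s+4, s ≥ 0
      obtain ⟨s, hs⟩ : ∃ s, n = 6*s+4 := ⟨n/6, by omega⟩
      have hz' : z = s + 1 := by rw [hzdef, if_neg (by omega)]; omega
      have hq' : q = 2*s+1 := by omega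
      have hav' : av = 2*s+2 := by omega
      rw [show q - ((z-1)+1) = s by omega, show q - (av - (z-1)) = s - 1 by omega,
        show q - (z+1) = s - 1 by omega, show q - (av - z) = s by omega]
      have hTs := two_T s
      have hTs1 := two_T (s-1)
      have hl3 : (s-1) * ((s-1)+1) = s*s - s := by
        rcases Nat.eq_zero_or_pos s with h0 | h0
        · subst h0; rfl
        · rw [show s - 1 + 1 = s by omega, Nat.sub_mul, one_mul]
      have hP := hsP s
      have hq2 : q * q = 4 * (s*s) + 4*s + 1 := by rw [hq']; ring
      have hn2 : n ^ 2 = 36 * (s*s) + 48*s + 16 := by rw [hs]; ring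
      rw [hn2, hq2]
      have hl1 : s * (s+1) = s*s + s := by ring
      omega
    · -- n = 6s+5, s ≥ 0
      obtain ⟨s, hs⟩ : ∃ s, n = 6*s+5 := ⟨n/6, by omega⟩
      have hz' : z = s + 1 := by rw [hzdef, if_neg (by omega)]; omega
      have hq' : q = 2*s+2 := by omega
      have hav' : av = 2*s+1 := by omega
      rw [show q - ((z-1)+1) = s + 1 by omega, show q - (av - (z-1)) = s + 1 by omega,
        show q - (z+1) = s by omega, show q - (av - z) = s + 2 by omega]
      have hTs := two_T s
      have hTs1 := two_T (s+1)
      have hTs2 := two_T (s+2)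
      have hP := hsP s
      have hq2 : q * q = 4 * (s*s) + 8*s + 4 := by rw [hq']; ring
      have hn2 : n ^ 2 = 36 * (s*s) + 60*s + 25 := by rw [hs]; ring
      rw [hn2, hq2]
      have hl1 : s * (s+1) = s*s + s := by ring
      have hl2 : (s+1) * (s+1+1) = s*s + 3*s + 2 := by ring
      have hl3 : (s+2) * (s+2+1) = s*s + 5*s + 6 := by ring
      omega
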